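/- Let L : ℕ → ℝ with L_n ≥ 1 for all n, and let η be a sequence of positive functions on (0,1), each differentiable with η_n′(x) ≤ 0, satisfying η_n(x) = (η_{n+1}(x) + 1/L_n)/(1 + x·L_n·η_{n+1}(x)) for all n and all x ∈ (0,1). Then for every n and x ∈ (0,1) one has 1 − x = (1 − x·L_n·η_n(x))·(1 + x·L_n·η_{n+1}(x)), and for every N ≥ 1: |η_0′(x)| = |η_N′(x)|·∏_{k=0}^{N−1} (1−x)/(1+x·L_k·η_{k+1}(x))² + Σ_{n=0}^{N−1} (L_n·η_{n+1}(x)² + η_{n+1}(x))·(1−x)^{−1}·∏_{k=0}^{n} (1−x)/(1+x·L_k·η_{k+1}(x))². -/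

import Mathlib

/-- The exact iterated-derivative identity (eq. (55)): for the multigraph recursion
one has `1 - x = (1 - x L_n η_n)(1 + x L_n η_{n+1})` and
`|η_0'| = |η_N'| Π_{k<N} (1-x)/(1+x L_k η_{k+1})² +
  Σ_{n<N} (L_n η_{n+1}² + η_{n+1})(1-x)⁻¹ Π_{k≤n} (1-x)/(1+x L_k η_{k+1})²`. -/
theorem stmt_7 (L : ℕ → ℝ) (hL : ∀ n : ℕ, 1 ≤ L n)
    (η η' : ℕ → ℝ → ℝ)
    (hpos : ∀ (n : ℕ), ∀ x ∈ Set.Ioo (0:ℝ) 1, 0 < η n x)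
    (hderiv : ∀ (n : ℕ), ∀ x ∈ Set.Ioo (0:ℝ) 1, HasDerivAt (η n) (η' n x) x)
    (hmono : ∀ (n : ℕ), ∀ x ∈ Set.Ioo (0:ℝ) 1, η' n x ≤ 0)
    (hrec : ∀ (n : ℕ), ∀ x ∈ Set.Ioo (0:ℝ) 1,
      η n x = (η (n+1) x + 1 / L n) / (1 + x * L n * η (n+1) x)) :
    ∀ x ∈ Set.Ioo (0:ℝ) 1,
      (∀ n : ℕ, 1 - x = (1 - x * L n * η n x) * (1 + x * L n * η (n+1) x)) ∧
      ∀ N : ℕ, 1 ≤ N →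
        |η' 0 x| = |η' N x| *
            (∏ k ∈ Finset.range N, (1 - x) / (1 + x * L k * η (k+1) x)^2) +
          ∑ n ∈ Finset.range N,
            (L n * (η (n+1) x)^2 + η (n+1) x) * (1 - x)⁻¹ *
              (∏ k ∈ Finset.range (n+1), (1 - x) / (1 + x * L k * η (k+1) x)^2) := by
  intro x hx
  obtain ⟨hx0, hx1⟩ := hx
  have hx : x ∈ Set.Ioo (0:ℝ) 1 := ⟨hx0, hx1⟩
  have hLpos : ∀ n, (0:ℝ) < L n := fun n => lt_of_lt_of_le one_pos (hL n)
  have hLne : ∀ n, L n ≠ 0 := fun n => (hLpos n).ne'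
  have hD : ∀ n, 0 < 1 + x * L n * η (n+1) x := by
    intro n
    have := mul_pos (mul_pos hx0 (hLpos n)) (hpos (n+1) x hx)
    linarith
  have hDne : ∀ n, (1 + x * L n * η (n+1) x) ≠ 0 := fun n => (hD n).ne'
  have h1x : (1:ℝ) - x ≠ 0 := by linarith
  -- part 1
  have part1 : ∀ n : ℕ, 1 - x = (1 - x * L n * η n x) * (1 + x * L n * η (n+1) x) := by
    intro n
    have h0 : η n x * (1 + x * L n * η (n+1) x) = η (n+1) x + 1 / L n := by
      rw [hrec n x hx, div_mul_cancel₀ _ (hDne n)]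
    have hmul : η n x * (L n * (1 + x * L n * η (n+1) x)) = L n * η (n+1) x + 1 := by
      rw [mul_left_comm, h0, mul_add, mul_one_div, div_self (hLne n)]
    linear_combination x * hmul
  -- derivative formula
  have hder : ∀ n : ℕ, η' n x =
      ((1 - x) * η' (n+1) x - (L n * (η (n+1) x)^2 + η (n+1) x)) /
        (1 + x * L n * η (n+1) x)^2 := by
    intro n
    have hη : HasDerivAt (η (n+1)) (η' (n+1) x) x := hderiv (n+1) x hx
    have hden : HasDerivAt (fun y => 1 + y * L n * η (n+1) y)
        (L n * η (n+1) x + x * L n * η' (n+1) x) x := by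
      have h := ((hasDerivAt_id x).mul_const (L n)).mul hη
      have h2 := h.const_add 1
      refine h2.congr_deriv ?_
      simp only [id_eq]
      ring
    have hnum : HasDerivAt (fun y => η (n+1) y + 1 / L n) (η' (n+1) x) x :=
      hη.add_const _
    have hf : HasDerivAt (fun y => (η (n+1) y + 1 / L n) / (1 + y * L n * η (n+1) y))
        ((η' (n+1) x * (1 + x * L n * η (n+1) x) -
          (η (n+1) x + 1 / L n) * (L n * η (n+1) x + x * L n * η' (n+1) x)) /
          (1 + x * L n * η (n+1) x)^2) x := hnum.div hden (hDne n)
    have heq : η n =ᶠ[nhds x] fun y => (η (n+1) y + 1 / L n) / (1 + y * L n * η (n+1) y) := by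
      filter_upwards [Ioo_mem_nhds hx0 hx1] with y hy using hrec n y hy
    have huniq := (hderiv n x hx).unique (hf.congr_of_eventuallyEq heq)
    rw [huniq]
    congr 1
    field_simp [hLne n]
    ring
  -- single step
  have hstep : ∀ n : ℕ, |η' n x| =
      |η' (n+1) x| * ((1 - x) / (1 + x * L n * η (n+1) x)^2) +
      (L n * (η (n+1) x)^2 + η (n+1) x) * (1 - x)⁻¹ *
        ((1 - x) / (1 + x * L n * η (n+1) x)^2) := by
    intro n
    rw [abs_of_nonpos (hmono n x hx), abs_of_nonpos (hmono (n+1) x hx), hder n]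
    field_simp [hDne n, h1x]
    ring
  have key : ∀ N : ℕ, |η' 0 x| = |η' N x| *
      (∏ k ∈ Finset.range N, (1 - x) / (1 + x * L k * η (k+1) x)^2) +
      ∑ n ∈ Finset.range N,
        (L n * (η (n+1) x)^2 + η (n+1) x) * (1 - x)⁻¹ *
          (∏ k ∈ Finset.range (n+1), (1 - x) / (1 + x * L k * η (k+1) x)^2) := by
    intro N
    induction N with
    | zero => simp
    | succ N ih =>
      rw [ih, hstep N, Finset.prod_range_succ, Finset.sum_range_succ,
        Finset.prod_range_succ]
      ring
  exact ⟨part1, fun N _ => key N⟩
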